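/- Let X be a rank-k m×n real matrix with top-k left/right singular subspaces spanned by U and V (orthonormal columns), and let X̂ be another matrix with corresponding matrices Û, V̂. With ε0 := ‖X̂ − X‖₂/σ_k(X) < 1/2 and ε1 := ε0/(1−ε0), we have: σ_k(X̂) ≥ (1−ε0)σ_k(X) > 0, σ_k(Û^T U) ≥ √(1−ε1²), σ_k(V̂^T V) ≥ √(1−ε1²), and σ_k(Û^T X V̂) ≥ (1−ε1²)σ_k(X). -/

import Mathlib

/-- Euclidean norm of a vector in `ℝ^n`. -/
noncomputable def vnorm {n : ℕ} (v : Fin n → ℝ) : ℝ := Real.sqrt (∑ i, v i ^ 2)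

/-- The `j`-th largest singular value (1-indexed) of a real `m × n` matrix, via the
Courant–Fischer max-min characterization.  In particular `sval A 1` is the spectral
norm `‖A‖₂` and `sval A k` is `σ_k(A)`. -/
noncomputable def sval {m n : ℕ} (A : Matrix (Fin m) (Fin n) ℝ) (j : ℕ) : ℝ :=
  sSup {c : ℝ | 0 ≤ c ∧ ∃ W : Submodule ℝ (Fin n → ℝ), Module.finrank ℝ W = j ∧
    ∀ v ∈ W, c * vnorm v ≤ vnorm (A.mulVec v)}

/-- `U` is an `m × k` matrix of orthonormal columns spanning a top-`k` left singular
subspace of `A`: its columns are orthonormal eigenvectors of `A Aᵀ` whose eigenvalues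
are (at least) `σ_k(A)²`, i.e. belong to the `k` largest. -/
def IsTopSingular {m n k : ℕ} (A : Matrix (Fin m) (Fin n) ℝ)
    (U : Matrix (Fin m) (Fin k) ℝ) : Prop :=
  U.transpose * U = 1 ∧ ∃ D : Fin k → ℝ,
    A * A.transpose * U = U * Matrix.diagonal D ∧ ∀ j, sval A k ^ 2 ≤ D j

open Matrix

section basics
variable {m n k : ℕ}

lemma vnorm_nonneg (v : Fin n → ℝ) : 0 ≤ vnorm v := Real.sqrt_nonneg _

lemma vnorm_sq (v : Fin n → ℝ) : vnorm v ^ 2 = ∑ i, v i ^ 2 :=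
  Real.sq_sqrt (Finset.sum_nonneg fun i _ => sq_nonneg _)

lemma vnorm_sq_dot (v : Fin n → ℝ) : vnorm v ^ 2 = v ⬝ᵥ v := by
  rw [vnorm_sq]; simp [dotProduct, sq]

lemma vnorm_eq_zero {v : Fin n → ℝ} (h : vnorm v = 0) : v = 0 := by
  have h2 : ∑ i, v i ^ 2 = 0 := by
    have := vnorm_sq v; rw [h] at this; simpa using this.symm
  funext i
  have := (Finset.sum_eq_zero_iff_of_nonneg (fun i _ => sq_nonneg (v i))).1 h2 i (Finset.mem_univ i)
  exact pow_eq_zero_iff two_ne_zero |>.mp this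

lemma vnorm_pos {v : Fin n → ℝ} (h : v ≠ 0) : 0 < vnorm v := by
  rcases lt_or_eq_of_le (vnorm_nonneg v) with h' | h'
  · exact h'
  · exact absurd (vnorm_eq_zero h'.symm) h

lemma vnorm_smul (t : ℝ) (v : Fin n → ℝ) : vnorm (t • v) = |t| * vnorm v := by
  unfold vnorm
  rw [← Real.sqrt_sq_eq_abs, ← Real.sqrt_mul (sq_nonneg t), Finset.mul_sum]
  exact congrArg Real.sqrt (Finset.sum_congr rfl fun i _ => by simp [Pi.smul_apply, smul_eq_mul, mul_pow])

lemma dot_le_vnorm_mul (x y : Fin n → ℝ) : x ⬝ᵥ y ≤ vnorm x * vnorm y := by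
  have h := Finset.sum_mul_sq_le_sq_mul_sq Finset.univ x y
  have hx := vnorm_sq x; have hy := vnorm_sq y
  have h2 : (x ⬝ᵥ y) ^ 2 ≤ (vnorm x * vnorm y) ^ 2 := by
    rw [mul_pow, hx, hy]; simpa [dotProduct] using h
  have hnn : 0 ≤ vnorm x * vnorm y := mul_nonneg (vnorm_nonneg _) (vnorm_nonneg _)
  nlinarith [sq_nonneg (x ⬝ᵥ y - vnorm x * vnorm y)]

lemma vnorm_add_le (x y : Fin n → ℝ) : vnorm (x + y) ≤ vnorm x + vnorm y := by
  have h1 : vnorm (x + y) ^ 2 ≤ (vnorm x + vnorm y) ^ 2 := by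
    rw [vnorm_sq_dot]
    have h0 : (x + y) ⬝ᵥ (x + y) = x ⬝ᵥ x + 2 * (x ⬝ᵥ y) + y ⬝ᵥ y := by
      simp [add_dotProduct, dotProduct_add, dotProduct_comm y x]; ring
    rw [h0, ← vnorm_sq_dot, ← vnorm_sq_dot]
    have := dot_le_vnorm_mul x y
    nlinarith
  nlinarith [vnorm_nonneg (x+y), vnorm_nonneg x, vnorm_nonneg y]

lemma vnorm_neg (x : Fin n → ℝ) : vnorm (-x) = vnorm x := by
  unfold vnorm
  exact congrArg Real.sqrt (Finset.sum_congr rfl fun i _ => by simp)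

lemma vnorm_sub_le (x y : Fin n → ℝ) : vnorm (x - y) ≤ vnorm x + vnorm y := by
  rw [sub_eq_add_neg]; simpa [vnorm_neg] using vnorm_add_le x (-y)

end basics

section svalsec
variable {m n k : ℕ}

lemma sq_le_imp {a b : ℝ} (ha : 0 ≤ a) (hb : 0 ≤ b) (h : a ^ 2 ≤ b ^ 2) : a ≤ b := by nlinarith

lemma vnorm_zero : vnorm (0 : Fin n → ℝ) = 0 := by simp [vnorm]

lemma dot_mulVec (A : Matrix (Fin m) (Fin n) ℝ) (x : Fin m → ℝ) (y : Fin n → ℝ) :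
    x ⬝ᵥ A.mulVec y = Aᵀ.mulVec x ⬝ᵥ y := by
  rw [Matrix.dotProduct_mulVec, Matrix.mulVec_transpose]

lemma frob_bound (A : Matrix (Fin m) (Fin n) ℝ) (v : Fin n → ℝ) :
    vnorm (A.mulVec v) ≤ Real.sqrt (∑ i, ∑ j, A i j ^ 2) * vnorm v := by
  have hF : (0:ℝ) ≤ ∑ i, ∑ j, A i j ^ 2 :=
    Finset.sum_nonneg fun i _ => Finset.sum_nonneg fun j _ => sq_nonneg _
  apply sq_le_imp (vnorm_nonneg _) (mul_nonneg (Real.sqrt_nonneg _) (vnorm_nonneg _))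
  rw [mul_pow, Real.sq_sqrt hF, vnorm_sq, vnorm_sq]
  have h1 : ∀ i, (A.mulVec v) i ^ 2 ≤ (∑ j, A i j ^ 2) * ∑ j, v j ^ 2 := fun i =>
    Finset.sum_mul_sq_le_sq_mul_sq Finset.univ (A i) v
  calc ∑ i, (A.mulVec v) i ^ 2 ≤ ∑ i, (∑ j, A i j ^ 2) * ∑ j, v j ^ 2 :=
        Finset.sum_le_sum fun i _ => h1 i
    _ = (∑ i, ∑ j, A i j ^ 2) * ∑ j, v j ^ 2 := by rw [Finset.sum_mul]

lemma bddAbove_svalSet (A : Matrix (Fin m) (Fin n) ℝ) {j : ℕ} (hj : 0 < j) :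
    BddAbove {c : ℝ | 0 ≤ c ∧ ∃ W : Submodule ℝ (Fin n → ℝ), Module.finrank ℝ W = j ∧
      ∀ v ∈ W, c * vnorm v ≤ vnorm (A.mulVec v)} := by
  refine ⟨Real.sqrt (∑ i, ∑ j, A i j ^ 2), ?_⟩
  rintro c ⟨hc, W, hW, hWle⟩
  have hWbot : W ≠ ⊥ := by
    intro hbot
    rw [hbot, finrank_bot] at hW; omega
  obtain ⟨v, hvW, hv⟩ := Submodule.exists_mem_ne_zero_of_ne_bot hWbot
  have h1 := hWle v hvW
  have h2 := frob_bound A v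
  have h3 := vnorm_pos hv
  exact le_of_mul_le_mul_right (h1.trans h2) h3

lemma sval_nonneg (A : Matrix (Fin m) (Fin n) ℝ) (j : ℕ) : 0 ≤ sval A j :=
  Real.sSup_nonneg fun _ hx => hx.1

lemma le_sval {A : Matrix (Fin m) (Fin n) ℝ} {j : ℕ} (hj : 0 < j) {c : ℝ} (hc : 0 ≤ c)
    (W : Submodule ℝ (Fin n → ℝ)) (hW : Module.finrank ℝ W = j)
    (h : ∀ v ∈ W, c * vnorm v ≤ vnorm (A.mulVec v)) : c ≤ sval A j :=
  le_csSup (bddAbove_svalSet A hj) ⟨hc, W, hW, h⟩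

lemma sval_le_of_forall {A : Matrix (Fin m) (Fin n) ℝ} {j : ℕ} {b : ℝ} (hb : 0 ≤ b)
    (h : ∀ c ∈ {c : ℝ | 0 ≤ c ∧ ∃ W : Submodule ℝ (Fin n → ℝ), Module.finrank ℝ W = j ∧
      ∀ v ∈ W, c * vnorm v ≤ vnorm (A.mulVec v)}, c ≤ b) : sval A j ≤ b := by
  rcases Set.eq_empty_or_nonempty {c : ℝ | 0 ≤ c ∧ ∃ W : Submodule ℝ (Fin n → ℝ),
      Module.finrank ℝ W = j ∧ ∀ v ∈ W, c * vnorm v ≤ vnorm (A.mulVec v)} with he | hne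
  · unfold sval; rw [he, Real.sSup_empty]; exact hb
  · exact csSup_le hne h

lemma mulVec_le_sval_one (A : Matrix (Fin m) (Fin n) ℝ) (v : Fin n → ℝ) :
    vnorm (A.mulVec v) ≤ sval A 1 * vnorm v := by
  rcases eq_or_ne v 0 with rfl | hv
  · simp [Matrix.mulVec_zero, vnorm_zero]
  · have h3 := vnorm_pos hv
    have hmem : vnorm (A.mulVec v) / vnorm v ≤ sval A 1 := by
      apply le_sval one_pos (div_nonneg (vnorm_nonneg _) (vnorm_nonneg _))
        (Submodule.span ℝ {v}) (finrank_span_singleton hv)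
      intro w hw
      obtain ⟨t, rfl⟩ := Submodule.mem_span_singleton.1 hw
      rw [Matrix.mulVec_smul, vnorm_smul, vnorm_smul]
      have heq : vnorm (A.mulVec v) / vnorm v * (|t| * vnorm v) = |t| * vnorm (A.mulVec v) := by
        field_simp
      rw [heq]
    calc vnorm (A.mulVec v) = vnorm (A.mulVec v) / vnorm v * vnorm v := by
          field_simp
      _ ≤ sval A 1 * vnorm v := by
          exact mul_le_mul_of_nonneg_right hmem (vnorm_nonneg _)

lemma mulVec_transpose_le_sval_one (A : Matrix (Fin m) (Fin n) ℝ) (v : Fin m → ℝ) :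
    vnorm (Aᵀ.mulVec v) ≤ sval A 1 * vnorm v := by
  rcases eq_or_ne (vnorm (Aᵀ.mulVec v)) 0 with h0 | h0
  · rw [h0]; exact mul_nonneg (sval_nonneg A 1) (vnorm_nonneg v)
  · have key : vnorm (Aᵀ.mulVec v) ^ 2 ≤ vnorm v * (sval A 1 * vnorm (Aᵀ.mulVec v)) := by
      rw [vnorm_sq_dot]
      calc Aᵀ.mulVec v ⬝ᵥ Aᵀ.mulVec v = v ⬝ᵥ A.mulVec (Aᵀ.mulVec v) :=
            (dot_mulVec A v _).symm
        _ ≤ vnorm v * vnorm (A.mulVec (Aᵀ.mulVec v)) := dot_le_vnorm_mul _ _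
        _ ≤ vnorm v * (sval A 1 * vnorm (Aᵀ.mulVec v)) :=
            mul_le_mul_of_nonneg_left (mulVec_le_sval_one A _) (vnorm_nonneg _)
    have hpos : 0 < vnorm (Aᵀ.mulVec v) := lt_of_le_of_ne (vnorm_nonneg _) (Ne.symm h0)
    nlinarith
  
lemma sval_transpose_one (A : Matrix (Fin m) (Fin n) ℝ) : sval Aᵀ 1 = sval A 1 := by
  have key : ∀ (p q : ℕ) (B : Matrix (Fin p) (Fin q) ℝ), sval Bᵀ 1 ≤ sval B 1 := by
    intro p q B
    apply sval_le_of_forall (sval_nonneg B 1)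
    rintro c ⟨hc, W, hW, hWle⟩
    have hWbot : W ≠ ⊥ := by intro hbot; rw [hbot, finrank_bot] at hW; omega
    obtain ⟨v, hvW, hv⟩ := Submodule.exists_mem_ne_zero_of_ne_bot hWbot
    have h1 := hWle v hvW
    have h2 := mulVec_transpose_le_sval_one B v
    exact le_of_mul_le_mul_right (h1.trans h2) (vnorm_pos hv)
  refine le_antisymm (key _ _ A) ?_
  have := key _ _ Aᵀ
  rwa [Matrix.transpose_transpose] at this

end svalsec

section pos
variable {m n k : ℕ}

lemma sval_pos_of_rank {k : ℕ} (hk : 0 < k) (X : Matrix (Fin m) (Fin n) ℝ)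
    (hrank : X.rank = k) : 0 < sval X k := by
  classical
  set L := X.mulVecLin with hL
  obtain ⟨W, hcompl⟩ := Submodule.exists_isCompl (LinearMap.ker L)
  have hfr : Module.finrank ℝ W = k := by
    have h1 := Submodule.finrank_add_eq_of_isCompl hcompl
    have h2 := LinearMap.finrank_range_add_finrank_ker L
    have h3 : Module.finrank ℝ (LinearMap.range L) = k := hrank
    have h4 : Module.finrank ℝ (Fin n → ℝ) = n := Module.finrank_fin_fun ℝ
    omega
  have hn : 0 < n := by
    by_contra hn
    have : n = 0 := by omega
    subst this
    have : Module.finrank ℝ W = 0 := by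
      have : Module.finrank ℝ (Fin 0 → ℝ) = 0 := by simp
      have hle := Submodule.finrank_le W
      omega
    omega
  -- compact sphere argument
  have hWclosed : IsClosed (W : Set (Fin n → ℝ)) := Submodule.closed_of_finiteDimensional W
  have hK : IsCompact ((W : Set (Fin n → ℝ)) ∩ Metric.sphere 0 1) :=
    (isCompact_sphere (0 : Fin n → ℝ) 1).inter_left hWclosed
  have hWbot : W ≠ ⊥ := by
    intro hbot; rw [hbot, finrank_bot] at hfr; omega
  obtain ⟨w, hwW, hw⟩ := Submodule.exists_mem_ne_zero_of_ne_bot hWbot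
  have hwn : ‖w‖ ≠ 0 := norm_ne_zero_iff.2 hw
  have hKne : ((W : Set (Fin n → ℝ)) ∩ Metric.sphere 0 1).Nonempty := by
    refine ⟨‖w‖⁻¹ • w, Submodule.smul_mem W _ hwW, ?_⟩
    simp [norm_smul, inv_mul_cancel₀ hwn]
  have hf : Continuous (fun v : Fin n → ℝ => vnorm (X.mulVec v)) := by
    unfold vnorm
    apply Real.continuous_sqrt.comp
    apply continuous_finset_sum
    intro i _
    have : Continuous (fun v : Fin n → ℝ => X.mulVec v i) := by
      unfold Matrix.mulVec dotProduct
      exact continuous_finset_sum _ fun j _ => (continuous_const.mul (continuous_apply j))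
    exact this.pow 2
  obtain ⟨v₀, hv₀K, hmin⟩ := hK.exists_isMinOn hKne hf.continuousOn
  obtain ⟨hv₀W, hv₀s⟩ := hv₀K
  have hv₀n : ‖v₀‖ = 1 := by simpa using hv₀s
  have hv₀ne : v₀ ≠ 0 := by intro h; rw [h] at hv₀n; simp at hv₀n
  have hXv₀ : X.mulVec v₀ ≠ 0 := by
    intro h
    have hker : v₀ ∈ LinearMap.ker L := by simpa [hL, Matrix.mulVecLin] using h
    have : v₀ ∈ (⊥ : Submodule ℝ (Fin n → ℝ)) := by
      rw [← hcompl.inf_eq_bot]; exact ⟨hker, hv₀W⟩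
    exact hv₀ne (by simpa using this)
  set c₀ := vnorm (X.mulVec v₀) with hc₀
  have hc₀pos : 0 < c₀ := vnorm_pos hXv₀
  have hsn : (0:ℝ) < Real.sqrt n := Real.sqrt_pos.2 (by exact_mod_cast hn)
  refine lt_of_lt_of_le (show (0:ℝ) < c₀ / Real.sqrt n from div_pos hc₀pos hsn) ?_
  apply le_sval hk (le_of_lt (div_pos hc₀pos hsn)) W hfr
  intro v hvW
  rcases eq_or_ne v 0 with rfl | hv
  · simp [vnorm_zero, Matrix.mulVec_zero]
  · have hvnorm : ‖v‖ ≠ 0 := norm_ne_zero_iff.2 hv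
    have hu : (‖v‖⁻¹ • v) ∈ (W : Set (Fin n → ℝ)) ∩ Metric.sphere 0 1 := by
      refine ⟨Submodule.smul_mem W _ hvW, ?_⟩
      simp [norm_smul, inv_mul_cancel₀ hvnorm]
    have h1 : c₀ ≤ vnorm (X.mulVec (‖v‖⁻¹ • v)) := hmin hu
    have h2 : vnorm (X.mulVec (‖v‖⁻¹ • v)) = ‖v‖⁻¹ * vnorm (X.mulVec v) := by
      rw [Matrix.mulVec_smul, vnorm_smul, abs_of_nonneg (inv_nonneg.2 (norm_nonneg v))]
    have h3 : c₀ * ‖v‖ ≤ vnorm (X.mulVec v) := by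
      rw [h2] at h1
      have := mul_le_mul_of_nonneg_right h1 (norm_nonneg v)
      rwa [mul_comm ‖v‖⁻¹ _, mul_assoc, inv_mul_cancel₀ hvnorm, mul_one] at this
    have h4 : vnorm v ≤ Real.sqrt n * ‖v‖ := by
      apply sq_le_imp (vnorm_nonneg v) (mul_nonneg hsn.le (norm_nonneg v))
      rw [mul_pow, Real.sq_sqrt (by positivity : (0:ℝ) ≤ (n:ℝ)), vnorm_sq]
      calc ∑ i, v i ^ 2 ≤ ∑ _i : Fin n, ‖v‖ ^ 2 := by
            apply Finset.sum_le_sum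
            intro i _
            have := norm_le_pi_norm v i
            have h0 : |v i| ≤ ‖v‖ := by simpa using this
            nlinarith [abs_nonneg (v i), le_abs_self (v i), neg_abs_le (v i)]
        _ = (n:ℝ) * ‖v‖ ^ 2 := by simp [Finset.sum_const, Finset.card_univ]
    calc c₀ / Real.sqrt n * vnorm v ≤ c₀ / Real.sqrt n * (Real.sqrt n * ‖v‖) :=
          mul_le_mul_of_nonneg_left h4 (le_of_lt (div_pos hc₀pos hsn))
      _ = c₀ * ‖v‖ := by field_simp
      _ ≤ vnorm (X.mulVec v) := h3

end pos

section core
variable {m n k : ℕ}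

lemma vnorm_eq_of_sq_eq {p q : ℕ} {a : Fin p → ℝ} {b : Fin q → ℝ}
    (h : vnorm a ^ 2 = vnorm b ^ 2) : vnorm a = vnorm b := by
  have := Real.sqrt_sq (vnorm_nonneg a)
  have := Real.sqrt_sq (vnorm_nonneg b)
  nlinarith [vnorm_nonneg a, vnorm_nonneg b]

lemma vnorm_mulVec_orth {U : Matrix (Fin m) (Fin k) ℝ} (hUU : Uᵀ * U = 1)
    (c : Fin k → ℝ) : vnorm (U.mulVec c) = vnorm c := by
  apply vnorm_eq_of_sq_eq
  rw [vnorm_sq_dot, vnorm_sq_dot]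
  rw [dot_mulVec U (U.mulVec c) c, Matrix.mulVec_mulVec, hUU, Matrix.one_mulVec]

lemma quad_form_eq {A : Matrix (Fin m) (Fin n) ℝ} {U : Matrix (Fin m) (Fin k) ℝ}
    {D : Fin k → ℝ} (hD : A * Aᵀ * U = U * Matrix.diagonal D) (hUU : Uᵀ * U = 1)
    (c : Fin k → ℝ) :
    vnorm (Aᵀ.mulVec (U.mulVec c)) ^ 2 = ∑ i, D i * c i ^ 2 := by
  rw [vnorm_sq_dot]
  have h1 : Aᵀ.mulVec (U.mulVec c) ⬝ᵥ Aᵀ.mulVec (U.mulVec c)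
      = (U.mulVec c) ⬝ᵥ (A.mulVec (Aᵀ.mulVec (U.mulVec c))) := (dot_mulVec A _ _).symm
  rw [h1, Matrix.mulVec_mulVec, Matrix.mulVec_mulVec, hD]
  rw [← Matrix.mulVec_mulVec, dot_mulVec U (U.mulVec c), Matrix.mulVec_mulVec, hUU,
    Matrix.one_mulVec]
  simp only [dotProduct, Matrix.mulVec_diagonal]
  exact Finset.sum_congr rfl fun i _ => by ring

lemma quad_form_lower {A : Matrix (Fin m) (Fin n) ℝ} {U : Matrix (Fin m) (Fin k) ℝ}
    {D : Fin k → ℝ} (hD : A * Aᵀ * U = U * Matrix.diagonal D) (hUU : Uᵀ * U = 1)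
    {s : ℝ} (hs : 0 ≤ s) (hD2 : ∀ j, s ^ 2 ≤ D j) (c : Fin k → ℝ) :
    s * vnorm (U.mulVec c) ≤ vnorm (Aᵀ.mulVec (U.mulVec c)) := by
  apply sq_le_imp (mul_nonneg hs (vnorm_nonneg _)) (vnorm_nonneg _)
  rw [mul_pow, quad_form_eq hD hUU c, vnorm_mulVec_orth hUU, vnorm_sq]
  rw [Finset.mul_sum]
  apply Finset.sum_le_sum
  intro i _
  exact mul_le_mul_of_nonneg_right (hD2 i) (sq_nonneg _)

lemma sval_le_sval_transpose {A : Matrix (Fin m) (Fin n) ℝ} {U : Matrix (Fin m) (Fin k) ℝ}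
    (hk : 0 < k) (hU : IsTopSingular A U) : sval A k ≤ sval Aᵀ k := by
  obtain ⟨hUU, D, hD, hD2⟩ := hU
  have hinj : Function.Injective U.mulVecLin := by
    intro a b hab
    have : Uᵀ.mulVec (U.mulVec a) = Uᵀ.mulVec (U.mulVec b) := by
      simpa [Matrix.mulVecLin] using congrArg Uᵀ.mulVec hab
    simpa [Matrix.mulVec_mulVec, hUU, Matrix.one_mulVec] using this
  have hfr : Module.finrank ℝ (LinearMap.range U.mulVecLin) = k := by
    rw [LinearMap.finrank_range_of_inj hinj, Module.finrank_fin_fun]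
  apply le_sval hk (sval_nonneg A k) _ hfr
  rintro v ⟨c, rfl⟩
  exact quad_form_lower hD hUU (sval_nonneg A k) hD2 c

lemma sval_transpose_eq {A : Matrix (Fin m) (Fin n) ℝ} {U : Matrix (Fin m) (Fin k) ℝ}
    {V : Matrix (Fin n) (Fin k) ℝ} (hk : 0 < k) (hU : IsTopSingular A U)
    (hV : IsTopSingular Aᵀ V) : sval Aᵀ k = sval A k := by
  refine le_antisymm ?_ (sval_le_sval_transpose hk hU)
  have := sval_le_sval_transpose hk hV
  rwa [Matrix.transpose_transpose] at this

lemma proj_eq {A : Matrix (Fin m) (Fin n) ℝ} {U : Matrix (Fin m) (Fin k) ℝ}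
    {D : Fin k → ℝ} (hrank : A.rank = k) (hUU : Uᵀ * U = 1)
    (hD : A * Aᵀ * U = U * Matrix.diagonal D) (hDpos : ∀ j, 0 < D j) :
    U * Uᵀ * A = A := by
  classical
  have key : A * (Aᵀ * U * Matrix.diagonal (fun j => (D j)⁻¹)) = U := by
    rw [← Matrix.mul_assoc, ← Matrix.mul_assoc, hD, Matrix.mul_assoc,
      Matrix.diagonal_mul_diagonal]
    have : (fun j => D j * (D j)⁻¹) = fun _ => (1:ℝ) := by
      funext j; exact mul_inv_cancel₀ (hDpos j).ne'
    rw [this, Matrix.diagonal_one, Matrix.mul_one]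
  have hle : LinearMap.range U.mulVecLin ≤ LinearMap.range A.mulVecLin := by
    rintro x ⟨c, rfl⟩
    refine ⟨(Aᵀ * U * Matrix.diagonal (fun j => (D j)⁻¹)).mulVec c, ?_⟩
    simp only [Matrix.mulVecLin_apply]
    rw [Matrix.mulVec_mulVec, key]
  have hinj : Function.Injective U.mulVecLin := by
    intro a b hab
    have : Uᵀ.mulVec (U.mulVec a) = Uᵀ.mulVec (U.mulVec b) := by
      simpa [Matrix.mulVecLin] using congrArg Uᵀ.mulVec hab
    simpa [Matrix.mulVec_mulVec, hUU, Matrix.one_mulVec] using this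
  have hfrU : Module.finrank ℝ (LinearMap.range U.mulVecLin) = k := by
    rw [LinearMap.finrank_range_of_inj hinj, Module.finrank_fin_fun]
  have heq : LinearMap.range U.mulVecLin = LinearMap.range A.mulVecLin := by
    apply Submodule.eq_of_le_of_finrank_le hle
    rw [hfrU]
    exact le_of_eq hrank
  have hpoint : ∀ v, (U * Uᵀ).mulVec (A.mulVec v) = A.mulVec v := by
    intro v
    have hmem : A.mulVec v ∈ LinearMap.range U.mulVecLin := by
      rw [heq]; exact ⟨v, rfl⟩
    obtain ⟨c, hc⟩ := hmem
    simp only [Matrix.mulVecLin_apply] at hc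
    rw [← hc, Matrix.mulVec_mulVec, Matrix.mul_assoc, hUU, Matrix.mul_one]
  apply Matrix.ext
  intro i j
  have h := hpoint (Pi.single j 1)
  rw [Matrix.mulVec_mulVec] at h
  have h2 := congrFun h i
  simpa [Matrix.mulVec_single] using h2

end core

section wedin
variable {m n k : ℕ}

lemma pythagoras {U : Matrix (Fin m) (Fin k) ℝ} (hUU : Uᵀ * U = 1) (x : Fin m → ℝ) :
    vnorm (x - (U * Uᵀ).mulVec x) ^ 2 = vnorm x ^ 2 - vnorm (Uᵀ.mulVec x) ^ 2 := by
  set w := Uᵀ.mulVec x with hw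
  have hp : (U * Uᵀ).mulVec x = U.mulVec w := (Matrix.mulVec_mulVec x U Uᵀ).symm
  have hxp : x ⬝ᵥ U.mulVec w = w ⬝ᵥ w := by rw [dot_mulVec U x w]
  have hpp : U.mulVec w ⬝ᵥ U.mulVec w = w ⬝ᵥ w := by
    have := vnorm_mulVec_orth hUU w
    have h2 : vnorm (U.mulVec w) ^ 2 = vnorm w ^ 2 := by rw [this]
    rw [vnorm_sq_dot, vnorm_sq_dot] at h2
    exact h2
  rw [hp, vnorm_sq_dot, vnorm_sq_dot, vnorm_sq_dot]
  rw [sub_dotProduct, dotProduct_sub, dotProduct_sub]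
  rw [hxp, hpp, dotProduct_comm (U.mulVec w) x, hxp]
  ring

lemma sin_bound (A Ah : Matrix (Fin m) (Fin n) ℝ) (U Uh : Matrix (Fin m) (Fin k) ℝ)
    (hUU : Uᵀ * U = 1) (hproj : U * Uᵀ * A = A)
    (hUhUh : Uhᵀ * Uh = 1) (Dh : Fin k → ℝ) (hDh : Ah * Ahᵀ * Uh = Uh * Matrix.diagonal Dh)
    {s : ℝ} (hs : 0 < s) (hDh2 : ∀ j, s ^ 2 ≤ Dh j) (w : Fin k → ℝ) :
    vnorm (Uh.mulVec w - (U * Uᵀ).mulVec (Uh.mulVec w)) ≤ (sval (Ah - A) 1 / s) * vnorm w := by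
  classical
  have hDpos : ∀ j, 0 < Dh j := fun j => lt_of_lt_of_le (pow_pos hs 2) (hDh2 j)
  set d : Fin k → ℝ := fun j => (Dh j)⁻¹ * w j with hd
  set vh : Fin n → ℝ := Ahᵀ.mulVec (Uh.mulVec d) with hvh
  have h1 : Ah.mulVec vh = Uh.mulVec w := by
    have hdiag : Matrix.diagonal Dh *ᵥ d = w := by
      funext j
      rw [Matrix.mulVec_diagonal]
      rw [hd]
      field_simp
      rw [mul_comm, mul_div_assoc, div_self (hDpos j).ne', mul_one]
    rw [hvh, Matrix.mulVec_mulVec, Matrix.mulVec_mulVec, hDh, ← Matrix.mulVec_mulVec, hdiag]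
  have h2 : vnorm vh ≤ vnorm w / s := by
    apply sq_le_imp (vnorm_nonneg _) (div_nonneg (vnorm_nonneg _) hs.le)
    rw [hvh, quad_form_eq hDh hUhUh d, div_pow, vnorm_sq]
    rw [le_div_iff₀ (pow_pos hs 2), Finset.sum_mul]
    apply Finset.sum_le_sum
    intro i _
    have hDi := hDpos i
    have : Dh i * d i ^ 2 * s ^ 2 = (s ^ 2 / Dh i) * w i ^ 2 := by
      rw [hd]; field_simp
    rw [this]
    have hfrac : s ^ 2 / Dh i ≤ 1 := (div_le_one hDi).2 (hDh2 i)
    nlinarith [sq_nonneg (w i)]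
  set E := Ah - A with hE
  have hEvh : E.mulVec vh = Uh.mulVec w - A.mulVec vh := by
    rw [hE, Matrix.sub_mulVec, h1]
  have h3 : Uh.mulVec w - (U * Uᵀ).mulVec (Uh.mulVec w)
      = E.mulVec vh - (U * Uᵀ).mulVec (E.mulVec vh) := by
    have hPA : (U * Uᵀ).mulVec (A.mulVec vh) = A.mulVec vh := by
      rw [Matrix.mulVec_mulVec, hproj]
    have hsplit : Uh.mulVec w = A.mulVec vh + E.mulVec vh := by rw [hEvh]; abel
    rw [hsplit, Matrix.mulVec_add, hPA]
    abel
  rw [h3]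
  have h4 : vnorm (E.mulVec vh - (U * Uᵀ).mulVec (E.mulVec vh)) ≤ vnorm (E.mulVec vh) := by
    apply sq_le_imp (vnorm_nonneg _) (vnorm_nonneg _)
    rw [pythagoras hUU]
    nlinarith [sq_nonneg (vnorm (Uᵀ.mulVec (E.mulVec vh)))]
  calc vnorm (E.mulVec vh - (U * Uᵀ).mulVec (E.mulVec vh)) ≤ vnorm (E.mulVec vh) := h4
    _ ≤ sval E 1 * vnorm vh := mulVec_le_sval_one E vh
    _ ≤ sval E 1 * (vnorm w / s) := mul_le_mul_of_nonneg_left h2 (sval_nonneg E 1)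
    _ = (sval E 1 / s) * vnorm w := by ring

lemma lower_bound_transpose {B : Matrix (Fin k) (Fin k) ℝ} {c : ℝ} (hc : 0 < c)
    (h : ∀ w, c * vnorm w ≤ vnorm (B.mulVec w)) (w : Fin k → ℝ) :
    c * vnorm w ≤ vnorm (Bᵀ.mulVec w) := by
  classical
  have hinj : Function.Injective B.mulVec := by
    intro a b hab
    have hsub : B.mulVec (a - b) = 0 := by rw [Matrix.mulVec_sub, hab, sub_self]
    have := h (a - b)
    rw [hsub, vnorm_zero] at this
    have h0 : vnorm (a - b) ≤ 0 := by nlinarith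
    have := vnorm_eq_zero (le_antisymm h0 (vnorm_nonneg _))
    exact sub_eq_zero.1 this
  have hunit : IsUnit B := Matrix.mulVec_injective_iff_isUnit.1 hinj
  have hdet : IsUnit B.det := (Matrix.isUnit_iff_isUnit_det B).1 hunit
  have hBM : B * B⁻¹ = 1 := Matrix.mul_nonsing_inv B hdet
  have hMB : B⁻¹ * B = 1 := Matrix.nonsing_inv_mul B hdet
  have hM : ∀ v, vnorm (B⁻¹.mulVec v) ≤ c⁻¹ * vnorm v := by
    intro v
    have hv : B.mulVec (B⁻¹.mulVec v) = v := by
      rw [Matrix.mulVec_mulVec, hBM, Matrix.one_mulVec]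
    have := h (B⁻¹.mulVec v)
    rw [hv] at this
    have hcc : c⁻¹ * c = 1 := inv_mul_cancel₀ hc.ne'
    have h5 := mul_le_mul_of_nonneg_left this (inv_nonneg.2 hc.le)
    calc vnorm (B⁻¹.mulVec v) = c⁻¹ * c * vnorm (B⁻¹.mulVec v) := by rw [hcc, one_mul]
      _ = c⁻¹ * (c * vnorm (B⁻¹.mulVec v)) := by ring
      _ ≤ c⁻¹ * vnorm v := h5
  have hMT : ∀ v, vnorm ((B⁻¹)ᵀ.mulVec v) ≤ c⁻¹ * vnorm v := by
    intro v
    rcases eq_or_ne (vnorm ((B⁻¹)ᵀ.mulVec v)) 0 with h0 | h0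
    · rw [h0]
      exact mul_nonneg (inv_nonneg.2 hc.le) (vnorm_nonneg v)
    · have hpos : 0 < vnorm ((B⁻¹)ᵀ.mulVec v) := lt_of_le_of_ne (vnorm_nonneg _) (Ne.symm h0)
      have key : vnorm ((B⁻¹)ᵀ.mulVec v) ^ 2 ≤ vnorm v * (c⁻¹ * vnorm ((B⁻¹)ᵀ.mulVec v)) := by
        rw [vnorm_sq_dot]
        calc (B⁻¹)ᵀ.mulVec v ⬝ᵥ (B⁻¹)ᵀ.mulVec v = v ⬝ᵥ B⁻¹.mulVec ((B⁻¹)ᵀ.mulVec v) :=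
              (dot_mulVec B⁻¹ v _).symm
          _ ≤ vnorm v * vnorm (B⁻¹.mulVec ((B⁻¹)ᵀ.mulVec v)) := dot_le_vnorm_mul _ _
          _ ≤ vnorm v * (c⁻¹ * vnorm ((B⁻¹)ᵀ.mulVec v)) :=
              mul_le_mul_of_nonneg_left (hM _) (vnorm_nonneg v)
      nlinarith
  have hw : (B⁻¹)ᵀ.mulVec (Bᵀ.mulVec w) = w := by
    rw [Matrix.mulVec_mulVec, ← Matrix.transpose_mul, hBM, Matrix.transpose_one,
      Matrix.one_mulVec]
  have := hMT (Bᵀ.mulVec w)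
  rw [hw] at this
  calc c * vnorm w ≤ c * (c⁻¹ * vnorm (Bᵀ.mulVec w)) := mul_le_mul_of_nonneg_left this hc.le
    _ = vnorm (Bᵀ.mulVec w) := by field_simp

end wedin

set_option maxHeartbeats 1000000

/-- (Singular subspace perturbation, Lemma "matrix-perturb" (1)–(5).)
Let `X` be a rank-`k` `m×n` real matrix with top-`k` left/right singular subspaces spanned
by the orthonormal columns of `U`, `V`; similarly `Û`, `V̂` for `X̂`.  With
`ε₀ := ‖X̂ − X‖₂ / σ_k(X) < 1/2` and `ε₁ := ε₀/(1−ε₀)`: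
`σ_k(X̂) ≥ (1−ε₀)σ_k(X) > 0`, `σ_k(Ûᵀ U) ≥ √(1−ε₁²)`, `σ_k(V̂ᵀ V) ≥ √(1−ε₁²)`, and
`σ_k(Ûᵀ X V̂) ≥ (1−ε₁²)σ_k(X)`. -/
theorem stmt_8 {m n k : ℕ} (hk : 0 < k) (X Xh : Matrix (Fin m) (Fin n) ℝ)
    (hrank : X.rank = k)
    (U Uh : Matrix (Fin m) (Fin k) ℝ) (V Vh : Matrix (Fin n) (Fin k) ℝ)
    (hU : IsTopSingular X U) (hV : IsTopSingular X.transpose V)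
    (hUh : IsTopSingular Xh Uh) (hVh : IsTopSingular Xh.transpose Vh)
    (ε0 ε1 : ℝ)
    (hε0 : ε0 = sval (Xh - X) 1 / sval X k)
    (hε0lt : ε0 < 1 / 2)
    (hε1 : ε1 = ε0 / (1 - ε0)) :
    (1 - ε0) * sval X k ≤ sval Xh k ∧
    0 < (1 - ε0) * sval X k ∧
    Real.sqrt (1 - ε1 ^ 2) ≤ sval (Uh.transpose * U) k ∧
    Real.sqrt (1 - ε1 ^ 2) ≤ sval (Vh.transpose * V) k ∧
    (1 - ε1 ^ 2) * sval X k ≤ sval (Uh.transpose * X * Vh) k := by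
  have hσpos : 0 < sval X k := sval_pos_of_rank hk X hrank
  have hσT : sval Xᵀ k = sval X k := sval_transpose_eq hk hU hV
  have hσTh : sval Xhᵀ k = sval Xh k := sval_transpose_eq hk hUh hVh
  obtain ⟨hUU, DU, hDU, hDU2⟩ := hU
  obtain ⟨hVV, DV, hDV, hDV2⟩ := hV
  obtain ⟨hUhUh, DUh, hDUh, hDUh2⟩ := hUh
  obtain ⟨hVhVh, DVh, hDVh, hDVh2⟩ := hVh
  have hε0nonneg : 0 ≤ ε0 := by
    rw [hε0]; exact div_nonneg (sval_nonneg _ _) (sval_nonneg _ _)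
  have hE1 : sval (Xh - X) 1 = ε0 * sval X k := by
    rw [hε0, div_mul_cancel₀ _ hσpos.ne']
  have hET : sval (Xhᵀ - Xᵀ) 1 = sval (Xh - X) 1 := by
    rw [← Matrix.transpose_sub, sval_transpose_one]
  -- lower bound on X over range V
  have hDV2' : ∀ j, sval X k ^ 2 ≤ DV j := fun j => by rw [← hσT]; exact hDV2 j
  have hXlow : ∀ c : Fin k → ℝ,
      sval X k * vnorm (V.mulVec c) ≤ vnorm (X.mulVec (V.mulVec c)) := by
    intro c
    have h := quad_form_lower hDV hVV (sval_nonneg X k) hDV2' c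
    rwa [Matrix.transpose_transpose] at h
  have hVinj : Function.Injective V.mulVecLin := by
    intro a b hab
    have : Vᵀ.mulVec (V.mulVec a) = Vᵀ.mulVec (V.mulVec b) := by
      simpa [Matrix.mulVecLin] using congrArg Vᵀ.mulVec hab
    simpa [Matrix.mulVec_mulVec, hVV, Matrix.one_mulVec] using this
  have hVfr : Module.finrank ℝ (LinearMap.range V.mulVecLin) = k := by
    rw [LinearMap.finrank_range_of_inj hVinj, Module.finrank_fin_fun]
  have h1ε0 : 0 < 1 - ε0 := by linarith
  have hs : 0 < (1 - ε0) * sval X k := mul_pos h1ε0 hσpos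
  -- Part 1
  have hpart1 : (1 - ε0) * sval X k ≤ sval Xh k := by
    apply le_sval hk hs.le _ hVfr
    rintro v ⟨c, rfl⟩
    simp only [Matrix.mulVecLin_apply]
    have hXv := hXlow c
    have htri : vnorm (X.mulVec (V.mulVec c)) ≤
        vnorm (Xh.mulVec (V.mulVec c)) + vnorm ((Xh - X).mulVec (V.mulVec c)) := by
      have hXeq : X.mulVec (V.mulVec c)
          = Xh.mulVec (V.mulVec c) - (Xh - X).mulVec (V.mulVec c) := by
        rw [Matrix.sub_mulVec]; abel
      rw [hXeq]
      exact vnorm_sub_le _ _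
    have hEb : vnorm ((Xh - X).mulVec (V.mulVec c))
        ≤ ε0 * sval X k * vnorm (V.mulVec c) := by
      have := mulVec_le_sval_one (Xh - X) (V.mulVec c)
      rwa [hE1] at this
    nlinarith [vnorm_nonneg (V.mulVec c)]
  refine ⟨hpart1, hs, ?_⟩
  -- epsilon1 facts
  have hε1nonneg : 0 ≤ ε1 := by rw [hε1]; positivity
  have hε1lt1 : ε1 < 1 := by
    rw [hε1, div_lt_one h1ε0]; linarith
  have h1ε1 : 0 < 1 - ε1 ^ 2 := by nlinarith
  set c := Real.sqrt (1 - ε1 ^ 2) with hcdef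
  have hcsq : c ^ 2 = 1 - ε1 ^ 2 := Real.sq_sqrt h1ε1.le
  have hcpos : 0 < c := Real.sqrt_pos.2 h1ε1
  -- eigenvalue lower bounds for hatted matrices
  have hDUhge : ∀ j, ((1 - ε0) * sval X k) ^ 2 ≤ DUh j := fun j =>
    le_trans (pow_le_pow_left₀ hs.le hpart1 2) (hDUh2 j)
  have hDVhge : ∀ j, ((1 - ε0) * sval X k) ^ 2 ≤ DVh j := by
    intro j
    have h1 : (1 - ε0) * sval X k ≤ sval Xhᵀ k := by rw [hσTh]; exact hpart1
    exact le_trans (pow_le_pow_left₀ hs.le h1 2) (hDVh2 j)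
  have heps1 : sval (Xh - X) 1 / ((1 - ε0) * sval X k) = ε1 := by
    rw [hE1, hε1]
    field_simp
  -- positivity of eigenvalues of X and Xᵀ
  have hDUpos : ∀ j, 0 < DU j := fun j => lt_of_lt_of_le (pow_pos hσpos 2) (hDU2 j)
  have hDVpos : ∀ j, 0 < DV j := fun j =>
    lt_of_lt_of_le (pow_pos (by rw [hσT]; exact hσpos) 2) (hDV2 j)
  have hprojX : U * Uᵀ * X = X := proj_eq hrank hUU hDU hDUpos
  have hrankT : Xᵀ.rank = k := by rw [Matrix.rank_transpose]; exact hrank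
  have hprojXT : V * Vᵀ * Xᵀ = Xᵀ := proj_eq hrankT hVV hDV hDVpos
  -- Part 3 : easy direction for U
  have hsinU : ∀ w : Fin k → ℝ,
      vnorm (Uh.mulVec w - (U * Uᵀ).mulVec (Uh.mulVec w)) ≤ ε1 * vnorm w := by
    intro w
    have := sin_bound X Xh U Uh hUU hprojX hUhUh DUh hDUh hs hDUhge w
    rwa [heps1] at this
  have hBU : ∀ w : Fin k → ℝ, c * vnorm w ≤ vnorm ((Uᵀ * Uh).mulVec w) := by
    intro w
    apply sq_le_imp (mul_nonneg hcpos.le (vnorm_nonneg _)) (vnorm_nonneg _)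
    rw [mul_pow, hcsq, ← Matrix.mulVec_mulVec]
    have hpy := pythagoras hUU (Uh.mulVec w)
    have horth : vnorm (Uh.mulVec w) = vnorm w := vnorm_mulVec_orth hUhUh w
    have hsq : vnorm (Uh.mulVec w - (U * Uᵀ).mulVec (Uh.mulVec w)) ^ 2
        ≤ (ε1 * vnorm w) ^ 2 :=
      pow_le_pow_left₀ (vnorm_nonneg _) (hsinU w) 2
    rw [horth] at hpy
    have hexp : (ε1 * vnorm w) ^ 2 = ε1 ^ 2 * vnorm w ^ 2 := by ring
    rw [hexp] at hsq
    nlinarith [hpy, hsq]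
  have hBUT : ∀ w : Fin k → ℝ, c * vnorm w ≤ vnorm ((Uhᵀ * U).mulVec w) := by
    intro w
    have := lower_bound_transpose hcpos hBU w
    rwa [Matrix.transpose_mul, Matrix.transpose_transpose] at this
  have hfrtop : Module.finrank ℝ (⊤ : Submodule ℝ (Fin k → ℝ)) = k := by
    rw [finrank_top, Module.finrank_fin_fun]
  have hpart3 : c ≤ sval (Uhᵀ * U) k :=
    le_sval hk hcpos.le ⊤ hfrtop (fun v _ => hBUT v)
  -- Part 4 : same for V side
  have hsinV : ∀ w : Fin k → ℝ,
      vnorm (Vh.mulVec w - (V * Vᵀ).mulVec (Vh.mulVec w)) ≤ ε1 * vnorm w := by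
    intro w
    have := sin_bound Xᵀ Xhᵀ V Vh hVV hprojXT hVhVh DVh hDVh hs hDVhge w
    rwa [hET, heps1] at this
  have hBV : ∀ w : Fin k → ℝ, c * vnorm w ≤ vnorm ((Vᵀ * Vh).mulVec w) := by
    intro w
    apply sq_le_imp (mul_nonneg hcpos.le (vnorm_nonneg _)) (vnorm_nonneg _)
    rw [mul_pow, hcsq, ← Matrix.mulVec_mulVec]
    have hpy := pythagoras hVV (Vh.mulVec w)
    have horth : vnorm (Vh.mulVec w) = vnorm w := vnorm_mulVec_orth hVhVh w
    have hsq : vnorm (Vh.mulVec w - (V * Vᵀ).mulVec (Vh.mulVec w)) ^ 2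
        ≤ (ε1 * vnorm w) ^ 2 :=
      pow_le_pow_left₀ (vnorm_nonneg _) (hsinV w) 2
    rw [horth] at hpy
    have hexp : (ε1 * vnorm w) ^ 2 = ε1 ^ 2 * vnorm w ^ 2 := by ring
    rw [hexp] at hsq
    nlinarith [hpy, hsq]
  have hBVT : ∀ w : Fin k → ℝ, c * vnorm w ≤ vnorm ((Vhᵀ * V).mulVec w) := by
    intro w
    have := lower_bound_transpose hcpos hBV w
    rwa [Matrix.transpose_mul, Matrix.transpose_transpose] at this
  have hpart4 : c ≤ sval (Vhᵀ * V) k :=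
    le_sval hk hcpos.le ⊤ hfrtop (fun v _ => hBVT v)
  refine ⟨hpart3, hpart4, ?_⟩
  -- Part 5
  have hprojright : X * (V * Vᵀ) = X := by
    have h := congrArg Matrix.transpose hprojXT
    rw [Matrix.transpose_mul, Matrix.transpose_mul, Matrix.transpose_transpose] at h
    rw [← Matrix.mul_assoc] at h
    calc X * (V * Vᵀ) = Xᵀᵀ * Vᵀᵀ * Vᵀ := by
          rw [Matrix.transpose_transpose, Matrix.transpose_transpose, Matrix.mul_assoc]
      _ = X := h
  apply le_sval hk (mul_nonneg h1ε1.le hσpos.le) ⊤ hfrtop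
  intro w _
  set z : Fin k → ℝ := (Vᵀ * Vh).mulVec w with hz
  set q : Fin n → ℝ := V.mulVec z with hq
  set t : Fin m → ℝ := X.mulVec q with ht
  have hXy : X.mulVec (Vh.mulVec w) = t := by
    rw [ht, hq, hz]
    simp only [Matrix.mulVec_mulVec]
    rw [← Matrix.mul_assoc, ← Matrix.mul_assoc, Matrix.mul_assoc X V Vᵀ, hprojright]
  have htP : (U * Uᵀ).mulVec t = t := by
    rw [ht, Matrix.mulVec_mulVec, hprojX]
  have hr : t = U.mulVec (Uᵀ.mulVec t) := by
    rw [Matrix.mulVec_mulVec, htP]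
  have hUt : vnorm (Uᵀ.mulVec t) = vnorm t := by
    have hpy := pythagoras hUU t
    have h0 : t - (U * Uᵀ).mulVec t = 0 := by rw [htP, sub_self]
    rw [h0, vnorm_zero] at hpy
    apply vnorm_eq_of_sq_eq
    nlinarith
  have hchain : (Uhᵀ * X * Vh).mulVec w = (Uhᵀ * U).mulVec (Uᵀ.mulVec t) := by
    have e1 : (Uhᵀ * X * Vh).mulVec w = Uhᵀ.mulVec (X.mulVec (Vh.mulVec w)) := by
      simp only [Matrix.mulVec_mulVec, Matrix.mul_assoc]
    rw [e1, hXy, ← Matrix.mulVec_mulVec (Uᵀ.mulVec t) Uhᵀ U, ← hr]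
  rw [hchain]
  have step1 : c * vnorm (Uᵀ.mulVec t) ≤ vnorm ((Uhᵀ * U).mulVec (Uᵀ.mulVec t)) := hBUT _
  have step2 : sval X k * vnorm (V.mulVec z) ≤ vnorm t := by rw [ht, hq]; exact hXlow z
  have step3 : c * vnorm w ≤ vnorm z := hBV w
  have hVz : vnorm (V.mulVec z) = vnorm z := vnorm_mulVec_orth hVV z
  have h5 : sval X k * vnorm z ≤ vnorm t := by rw [← hVz]; exact step2
  have hA : c * (sval X k * (c * vnorm w)) ≤ c * (sval X k * vnorm z) :=
    mul_le_mul_of_nonneg_left (mul_le_mul_of_nonneg_left step3 hσpos.le) hcpos.le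
  have hB : c * (sval X k * vnorm z) ≤ c * vnorm t := mul_le_mul_of_nonneg_left h5 hcpos.le
  have hfinal : (1 - ε1 ^ 2) * sval X k * vnorm w ≤ c * vnorm (Uᵀ.mulVec t) := by
    rw [hUt, ← hcsq]
    calc c ^ 2 * sval X k * vnorm w = c * (sval X k * (c * vnorm w)) := by ring
      _ ≤ c * vnorm t := le_trans hA hB
  exact le_trans hfinal step1
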